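/- Let E and F be finite-dimensional real inner product spaces with dim F < dim E - 1, and let α : E → E → F be a symmetric bilinear map such that for all orthonormal u, w in E, ⟨α(u,u), α(w,w)⟩ ≤ ‖α(u,w)‖². Then there exist orthonormal vectors u, v in E with α(u, u) = 0 and α(u, v) = 0. -/

import Mathlib

open scoped RealInnerProductSpace

private lemma quartic_coeff_nonneg (b d : ℝ) (h : ∀ t : ℝ, 0 ≤ b * t ^ 2 + d * t ^ 4) :
    0 ≤ b := by
  by_contra hb
  push_neg at hb
  rcases le_or_gt d 0 with hd | hd
  · have := h 1; nlinarith
  · set s : ℝ := -b / (2 * d) with hs_def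
    have hs_pos : 0 < s := div_pos (by linarith) (by linarith)
    have ht := h (Real.sqrt s)
    have hsq : Real.sqrt s ^ 2 = s := Real.sq_sqrt hs_pos.le
    have h4 : Real.sqrt s ^ 4 = s ^ 2 := by
      rw [show Real.sqrt s ^ 4 = (Real.sqrt s ^ 2) ^ 2 by ring, hsq]
    rw [hsq, h4] at ht
    have hds : d * s = -b / 2 := by rw [hs_def]; field_simp
    nlinarith [mul_pos hs_pos hs_pos]

private lemma inner_three {F : Type*} [NormedAddCommGroup F] [InnerProductSpace ℝ F]
    (X Y Z : F) : ⟪X + Y + Z, X + Y + Z⟫ =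
      ⟪X, X⟫ + ⟪Y, Y⟫ + ⟪Z, Z⟫ + 2 * ⟪X, Y⟫ + 2 * ⟪X, Z⟫ + 2 * ⟪Y, Z⟫ := by
  simp only [inner_add_left, inner_add_right]
  rw [real_inner_comm Y X, real_inner_comm Z X, real_inner_comm Z Y]
  ring

/-- Combining the two steps of Wilking's argument: under the dimension assumption
and the Gauss-equation inequality for orthonormal pairs, there exist orthonormal
vectors `u, v` with `α u u = 0` and `α u v = 0`. -/
theorem exists_orthonormal_pair_asymptotic
    {E F : Type*} [NormedAddCommGroup E] [InnerProductSpace ℝ E]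
    [NormedAddCommGroup F] [InnerProductSpace ℝ F]
    [FiniteDimensional ℝ E] [FiniteDimensional ℝ F]
    (hdim : Module.finrank ℝ F < Module.finrank ℝ E - 1)
    (α : E →ₗ[ℝ] E →ₗ[ℝ] F)
    (hsymm : ∀ x y : E, α x y = α y x)
    (hgauss : ∀ u w : E, ‖u‖ = 1 → ‖w‖ = 1 → ⟪u, w⟫ = 0 →
      ⟪α u u, α w w⟫ ≤ ‖α u w‖ ^ 2) :
    ∃ u v : E, ‖u‖ = 1 ∧ ‖v‖ = 1 ∧ ⟪u, v⟫ = 0 ∧ α u u = 0 ∧ α u v = 0 := by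
  classical
  have hE2 : 2 ≤ Module.finrank ℝ E := by omega
  have : Nontrivial E := Module.nontrivial_of_finrank_pos (R := ℝ) (by omega)
  -- continuity of x ↦ ‖α x x‖²
  have hcont : Continuous fun x : E => ‖α x x‖ ^ 2 := by
    have h1 : Continuous fun x : E =>
        ((LinearMap.toContinuousLinearMap : (E →ₗ[ℝ] F) ≃ₗ[ℝ] (E →L[ℝ] F)) (α x)) :=
      (((LinearMap.toContinuousLinearMap :
          (E →ₗ[ℝ] F) ≃ₗ[ℝ] (E →L[ℝ] F)).toLinearMap.comp α)).continuous_of_finiteDimensional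
    have h2 : Continuous fun x : E => α x x := by
      have := h1.clm_apply continuous_id
      simpa using this
    exact h2.norm.pow 2
  -- minimizer on the sphere
  obtain ⟨u0, hu0⟩ := exists_norm_eq E (zero_le_one (α := ℝ))
  have hsph : (Metric.sphere (0 : E) 1).Nonempty := ⟨u0, by simpa using hu0⟩
  obtain ⟨u, huS, humin⟩ :=
    (isCompact_sphere (0 : E) 1).exists_isMinOn hsph hcont.continuousOn
  have hu : ‖u‖ = 1 := by simpa using huS
  have hune : u ≠ 0 := by intro h; rw [h] at hu; simp at hu
  -- key inequality from second variation
  have key : ∀ w : E, ‖w‖ = 1 → ⟪u, w⟫ = 0 → ‖α u u‖ ^ 2 ≤ 3 * ‖α u w‖ ^ 2 := by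
    intro w hw huw
    set A := α u u with hA_def
    set B := α u w with hB_def
    set C := α w w with hC_def
    have hineq : ∀ t : ℝ, (1 + t ^ 2) ^ 2 * ‖A‖ ^ 2 ≤ ‖A + (2 * t) • B + t ^ 2 • C‖ ^ 2 := by
      intro t
      have hx_norm : ‖u + t • w‖ ^ 2 = 1 + t ^ 2 := by
        rw [norm_add_sq_real]
        simp [hu, hw, norm_smul, inner_smul_right, huw]
      set s : ℝ := ‖u + t • w‖ with hs_def
      have hs2 : s ^ 2 = 1 + t ^ 2 := hx_norm
      have hs_pos : 0 < s := by nlinarith [norm_nonneg (u + t • w)]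
      set x : E := s⁻¹ • (u + t • w) with hx_def
      have hxnorm : ‖x‖ = 1 := by
        rw [hx_def, norm_smul, Real.norm_eq_abs, abs_inv, abs_of_pos hs_pos]
        field_simp
        exact hs_def.symm
      have hmin : ‖α u u‖ ^ 2 ≤ ‖α x x‖ ^ 2 := humin (by simpa using hxnorm)
      have hax : α x x = (s⁻¹ * s⁻¹) • (A + (2 * t) • B + t ^ 2 • C) := by
        rw [hx_def]
        simp only [map_add, map_smul, LinearMap.smul_apply, LinearMap.add_apply,
          smul_add, smul_smul]
        rw [hsymm w u]
        module
      have haxn : ‖α x x‖ ^ 2 =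
          (s⁻¹ * s⁻¹) ^ 2 * ‖A + (2 * t) • B + t ^ 2 • C‖ ^ 2 := by
        rw [hax, norm_smul, Real.norm_eq_abs, abs_of_pos (show (0:ℝ) < s⁻¹ * s⁻¹ by positivity)]
        ring
      have hss : (s⁻¹ * s⁻¹) ^ 2 = ((1 + t ^ 2) ^ 2)⁻¹ := by
        rw [show s⁻¹ * s⁻¹ = (s ^ 2)⁻¹ by rw [sq]; ring, hs2]
        rw [← inv_pow]
      rw [haxn, hss] at hmin
      have hpos : (0 : ℝ) < (1 + t ^ 2) ^ 2 := by positivity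
      calc (1 + t ^ 2) ^ 2 * ‖A‖ ^ 2
          ≤ (1 + t ^ 2) ^ 2 * (((1 + t ^ 2) ^ 2)⁻¹ * ‖A + (2 * t) • B + t ^ 2 • C‖ ^ 2) :=
            by exact mul_le_mul_of_nonneg_left hmin hpos.le
        _ = ‖A + (2 * t) • B + t ^ 2 • C‖ ^ 2 := by field_simp
    -- expand
    have hexp : ∀ t : ℝ, ‖A + (2 * t) • B + t ^ 2 • C‖ ^ 2 =
        ‖A‖ ^ 2 + 4 * t ^ 2 * ‖B‖ ^ 2 + t ^ 4 * ‖C‖ ^ 2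
          + 4 * t * ⟪A, B⟫ + 2 * t ^ 2 * ⟪A, C⟫ + 4 * t ^ 3 * ⟪B, C⟫ := by
      intro t
      have h0 := inner_three A ((2 * t) • B) (t ^ 2 • C)
      simp only [inner_smul_left, inner_smul_right, RCLike.conj_to_real,
        map_mul, conj_trivial] at h0
      rw [← real_inner_self_eq_norm_sq, h0, real_inner_self_eq_norm_sq,
        real_inner_self_eq_norm_sq, real_inner_self_eq_norm_sq]
      ring
    have hq : ∀ t : ℝ, 0 ≤ (4 * ‖B‖ ^ 2 + 2 * ⟪A, C⟫ - 2 * ‖A‖ ^ 2) * t ^ 2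
        + (‖C‖ ^ 2 - ‖A‖ ^ 2) * t ^ 4 := by
      intro t
      have h1 := hineq t
      have h2 := hineq (-t)
      rw [hexp t] at h1
      rw [hexp (-t)] at h2
      nlinarith [h1, h2]
    have hb := quartic_coeff_nonneg _ _ hq
    have hg := hgauss u w hu hw huw
    rw [← hA_def, ← hB_def, ← hC_def] at hg
    linarith
  -- Step 1: α u u = 0
  set K : Submodule ℝ E := (ℝ ∙ u)ᗮ with hK_def
  set L : K →ₗ[ℝ] F := (α u).comp K.subtype with hL_def
  have hKrank : Module.finrank ℝ (ℝ ∙ u) + Module.finrank ℝ K = Module.finrank ℝ E :=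
    Submodule.finrank_add_finrank_orthogonal (ℝ ∙ u)
  have hspan1 : Module.finrank ℝ (ℝ ∙ u : Submodule ℝ E) = 1 := finrank_span_singleton hune
  have hKfin : Module.finrank ℝ K = Module.finrank ℝ E - 1 := by omega
  have hA : α u u = 0 := by
    by_contra hA0
    have hApos : 0 < ‖α u u‖ ^ 2 := pow_pos (norm_pos_iff.mpr hA0) 2
    have hinj : Function.Injective L := by
      rw [← LinearMap.ker_eq_bot, Submodule.eq_bot_iff]
      intro w hw
      by_contra hw0
      have hwE : (w : E) ≠ 0 := fun h => hw0 (Subtype.ext h)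
      have hwn : (0 : ℝ) < ‖(w : E)‖ := norm_pos_iff.mpr hwE
      set w' : E := ‖(w : E)‖⁻¹ • (w : E) with hw'_def
      have hw'n : ‖w'‖ = 1 := by
        rw [hw'_def, norm_smul, Real.norm_eq_abs, abs_inv, abs_of_pos hwn]; field_simp
      have hw'o : ⟪u, w'⟫ = 0 := by
        rw [hw'_def, inner_smul_right]
        have : ⟪u, (w : E)⟫ = 0 :=
          Submodule.mem_orthogonal_singleton_iff_inner_right.mp w.2
        rw [this]; ring
      have hkey := key w' hw'n hw'o
      have hLw : α u (w : E) = 0 := by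
        have : L w = 0 := hw
        simpa [hL_def] using this
      have : α u w' = 0 := by rw [hw'_def, map_smul, hLw, smul_zero]
      rw [this] at hkey
      simp at hkey
      exact hA0 hkey
    have := LinearMap.finrank_le_finrank_of_injective hinj
    omega
  -- Step 2: find v in the kernel of L
  have hrn := LinearMap.finrank_range_add_finrank_ker L
  have hrle : Module.finrank ℝ (LinearMap.range L) ≤ Module.finrank ℝ F :=
    (LinearMap.range L).finrank_le
  have hkerpos : 0 < Module.finrank ℝ (LinearMap.ker L) := by omega
  have hkerne : LinearMap.ker L ≠ ⊥ := by
    intro h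
    rw [h] at hkerpos
    simp at hkerpos
  obtain ⟨w, hwker, hw0⟩ := Submodule.ne_bot_iff _ |>.mp hkerne
  have hwE : (w : E) ≠ 0 := fun h => hw0 (Subtype.ext h)
  have hwn : (0 : ℝ) < ‖(w : E)‖ := norm_pos_iff.mpr hwE
  refine ⟨u, ‖(w : E)‖⁻¹ • (w : E), hu, ?_, ?_, hA, ?_⟩
  · rw [norm_smul, Real.norm_eq_abs, abs_inv, abs_of_pos hwn]; field_simp
  · rw [inner_smul_right]
    have : ⟪u, (w : E)⟫ = 0 :=
      Submodule.mem_orthogonal_singleton_iff_inner_right.mp w.2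
    rw [this]; ring
  · have hLw : α u (w : E) = 0 := by simpa [hL_def] using hwker
    rw [map_smul, hLw, smul_zero]
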